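/- Let G be a 2-connected graph contractible to a cactus T, and let T_B ⊆ V(T) be the set of vertices of T corresponding to big witness sets (witness sets with at least two vertices). Then the number of vertices t ∈ V(T) that lie on a path between two distinct vertices of T_B and are adjacent to a vertex of T_B is at most 4·|T_B|. -/

import Mathlib

set_option linter.unusedSectionVars false
set_option maxHeartbeats 1000000


open SimpleGraph

universe u v

/-- A cactus: a connected graph in which every edge lies on at most one cycle
(any two cycles through a common edge have the same edge set). -/
def IsCactus {V : Type u} (G : SimpleGraph V) : Prop :=
  G.Connected ∧ ∀ (e : Sym2 V) (a b : V) (c₁ : G.Walk a a) (c₂ : G.Walk b b),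
    c₁.IsCycle → c₂.IsCycle → e ∈ c₁.edges → e ∈ c₂.edges →
    {e' | e' ∈ c₁.edges} = {e' | e' ∈ c₂.edges}

/-- The graph `G/F` obtained by contracting the edges of `F`: its vertices are the
connected components of the subgraph spanned by the edges of `F` that lie in `G`. -/
def contract {V : Type u} (G : SimpleGraph V) (F : Set (Sym2 V)) :
    SimpleGraph (SimpleGraph.fromEdgeSet F ⊓ G).ConnectedComponent where
  Adj a b := a ≠ b ∧ ∃ x y : V, G.Adj x y ∧
      (SimpleGraph.fromEdgeSet F ⊓ G).connectedComponentMk x = a ∧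
      (SimpleGraph.fromEdgeSet F ⊓ G).connectedComponentMk y = b
  symm := ⟨by
    rintro a b ⟨hne, x, y, hadj, hx, hy⟩
    exact ⟨hne.symm, y, x, hadj.symm, hy, hx⟩⟩
  loopless := ⟨by
    rintro a ⟨hne, -⟩
    exact hne rfl⟩

/-- A cut-vertex of `G`: removing it disconnects the graph. -/
def IsCutVertex {V : Type u} (G : SimpleGraph V) (x : V) : Prop :=
  ¬ (G.induce ({x}ᶜ : Set V)).Connected

/-- 2-connected: connected, at least 3 vertices, no cut-vertex. -/
def TwoConnected {V : Type u} (G : SimpleGraph V) : Prop :=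
  G.Connected ∧ 3 ≤ Nat.card V ∧ ∀ x : V, (G.induce ({x}ᶜ : Set V)).Connected

/-- A cable path: a path whose internal vertices are adjacent exactly to their
two neighbours on the path. -/
def IsCablePath {V : Type u} (G : SimpleGraph V) (l : List V) : Prop :=
  l ≠ [] ∧ l.Nodup ∧ l.Chain' G.Adj ∧
  ∀ (i : ℕ) (h2 : i + 1 < l.length) (_h1 : 1 ≤ i) (y : V),
    G.Adj (l.get ⟨i, by omega⟩) y ↔
      (y = l.get ⟨i - 1, by omega⟩ ∨ y = l.get ⟨i + 1, h2⟩)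

/-- `G` is contractible to `H` via `ψ`: preimages are connected witness sets and
`H`-adjacency corresponds to existence of crossing edges of `G`. -/
def IsContraction {V : Type u} {W : Type v} (G : SimpleGraph V) (H : SimpleGraph W)
    (ψ : V → W) : Prop :=
  Function.Surjective ψ ∧
  (∀ t : W, (G.induce (ψ ⁻¹' {t})).Connected) ∧
  (∀ t t' : W, H.Adj t t' ↔ t ≠ t' ∧ ∃ x y : V, G.Adj x y ∧ ψ x = t ∧ ψ y = t')

/-- The witness set of `t` is big: it contains at least two vertices. -/
def BigWitness {V : Type u} {W : Type v} (ψ : V → W) (t : W) : Prop :=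
  ∃ a b : V, a ≠ b ∧ ψ a = t ∧ ψ b = t

/-- A 3-colouring `f` of `V(G)` is compatible with the `T`-witness structure given by `ψ`:
witness sets are monochromatic, adjacent big witness sets get distinct colours, and
endpoints of cable paths in `T` between two big witness sets through singleton witness
sets are coloured differently from their path-neighbours. -/
def Compatible {V : Type u} {W : Type v} (T : SimpleGraph W) (ψ : V → W)
    (f : V → Fin 3) : Prop :=
  (∀ x y : V, ψ x = ψ y → f x = f y) ∧
  (∀ t t' : W, BigWitness ψ t → BigWitness ψ t' → T.Adj t t' →
    ∀ x y : V, ψ x = t → ψ y = t' → f x ≠ f y) ∧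
  (∀ l : List W, IsCablePath T l → ∀ (hlen : 3 ≤ l.length),
    BigWitness ψ (l.get ⟨0, by omega⟩) →
    BigWitness ψ (l.get ⟨l.length - 1, by omega⟩) →
    (∀ (i : ℕ) (h : i < l.length), 1 ≤ i → i < l.length - 1 →
      ¬ BigWitness ψ (l.get ⟨i, h⟩)) →
    ((∀ x y : V, ψ x = l.get ⟨0, by omega⟩ → ψ y = l.get ⟨1, by omega⟩ → f x ≠ f y) ∧
     (∀ x y : V, ψ x = l.get ⟨l.length - 1, by omega⟩ →
        ψ y = l.get ⟨l.length - 2, by omega⟩ → f x ≠ f y)))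

/-- The graph `G - Z`, seen as a graph on all of `V`: edges of `G` avoiding `Z`. -/
def restrictOutside {V : Type u} (G : SimpleGraph V) (Z : Set V) : SimpleGraph V where
  Adj x y := G.Adj x y ∧ x ∉ Z ∧ y ∉ Z
  symm := ⟨by rintro x y ⟨h, hx, hy⟩; exact ⟨h.symm, hy, hx⟩⟩
  loopless := ⟨by rintro x ⟨h, -, -⟩; exact G.irrefl h⟩

/-- `Z` is a core of `G`: every connected component of `G - Z` is an isolated vertex
or (the vertex set of) a cable path of `G`. -/
def IsCore {V : Type u} (G : SimpleGraph V) (Z : Set V) : Prop :=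
  ∀ x ∉ Z, {u | (restrictOutside G Z).Reachable x u} = {x} ∨
    ∃ l : List V, IsCablePath G l ∧
      {u | (restrictOutside G Z).Reachable x u} = {u | u ∈ l}

/-- A connected core. -/
def IsConnectedCore {V : Type u} (G : SimpleGraph V) (Z : Set V) : Prop :=
  (G.induce Z).Connected ∧ IsCore G Z

/-- `B` induces a nonempty connected subgraph without cut-vertices. -/
def NoCutVertexSet {V : Type u} (G : SimpleGraph V) (B : Set V) : Prop :=
  B.Nonempty ∧ (G.induce B).Connected ∧
  ∀ x ∈ B, (B \ {x}).Nonempty → (G.induce (B \ {x})).Connected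

/-- A block of `G`: a maximal set inducing a connected subgraph without cut-vertices. -/
def IsBlock {V : Type u} (G : SimpleGraph V) (B : Set V) : Prop :=
  NoCutVertexSet G B ∧ ∀ B' : Set V, B ⊆ B' → NoCutVertexSet G B' → B = B'

/-- `B` is the vertex set of an induced cycle of `G`. -/
def IsCycleSet {V : Type u} (G : SimpleGraph V) (B : Set V) : Prop :=
  ∃ (a : V) (c : G.Walk a a), c.IsCycle ∧ {x | x ∈ c.support} = B ∧
    ∀ x ∈ B, ∀ y ∈ B, G.Adj x y → s(x, y) ∈ c.edges

/-- `G` can be turned into a cactus by contracting at most `k` edges. -/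
def KContractibleToCactus {V : Type u} (G : SimpleGraph V) (k : ℕ) : Prop :=
  ∃ F : Set (Sym2 V), F ⊆ G.edgeSet ∧ F.ncard ≤ k ∧ IsCactus (contract G F)

/-- `G` has a tree decomposition of width at most `w`. -/
def HasTreewidthAtMost {V : Type u} (G : SimpleGraph V) (w : ℕ) : Prop :=
  ∃ (ι : Type u) (T : SimpleGraph ι) (β : ι → Set V),
    T.Connected ∧ T.IsAcyclic ∧
    (∀ x : V, ∃ i, x ∈ β i) ∧
    (∀ ⦃x y : V⦄, G.Adj x y → ∃ i, x ∈ β i ∧ y ∈ β i) ∧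
    (∀ (x : V) (i j : ι), x ∈ β i → x ∈ β j →
      ∀ p : T.Walk i j, p.IsPath → ∀ z ∈ p.support, x ∈ β z) ∧
    (∀ i, (β i).ncard ≤ w + 1)


namespace CCC

variable {W : Type v} [DecidableEq W] (T : SimpleGraph W) (B : Set W)

/-- no vertex outside `B` has three distinct neighbours -/
def NoThree : Prop :=
  ∀ t ∉ B, ∀ a b c : W, T.Adj t a → T.Adj t b → T.Adj t c → a = b ∨ a = c ∨ b = c

/-- a path between two distinct members of `B` all of whose internal vertices avoid `B` -/
def IsLink {x y : W} (θ : T.Walk x y) : Prop :=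
  θ.IsPath ∧ x ≠ y ∧ x ∈ B ∧ y ∈ B ∧ ∀ w ∈ θ.support, w ≠ x → w ≠ y → w ∉ B

variable (r : W) (pa : W → W)

def PE : Set (Sym2 W) := {e | ∃ z : W, z ≠ r ∧ e = s(z, pa z)}

def GoodPa : Prop := ∀ v : W, v ≠ r → T.Adj v (pa v) ∧ T.dist (pa v) r + 1 = T.dist v r

def Assigned {x y : W} (θ : T.Walk x y) (w : W) (ph : Bool) : Prop :=
  (w = x ∨ w = y) ∧
  ∃ (f : W) (θ' : T.Walk w f), IsLink T B θ' ∧ (∀ e, e ∈ θ'.edges ↔ e ∈ θ.edges) ∧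
    (cond ph (s(w, pa w) ∈ θ'.edges)
     (∃ (a : W) (c : T.Walk a a), c.IsCycle ∧ (∀ e ∈ θ'.edges, e ∈ c.edges) ∧
       s(w, pa w) ∈ c.edges ∧ s(w, pa w) ∉ θ'.edges))

variable {T B r pa}

/-- the only edge of a path containing the initial vertex is the first edge -/
lemma edge_start {u x y : W} (h : T.Adj u x) (q : T.Walk x y)
    (hp : (Walk.cons h q).IsPath) {e : Sym2 W} (he : e ∈ (Walk.cons h q).edges)
    (hu : u ∈ e) : e = s(u, x) := by
  rw [Walk.edges_cons, List.mem_cons] at he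
  rcases he with he | he
  · exact he
  · exfalso
    obtain ⟨z, rfl⟩ := Sym2.mem_iff_exists.mp hu
    exact ((Walk.cons_isPath_iff _ _).mp hp).2 (q.fst_mem_support_of_mem_edges he)

/-- a cycle has exactly two edges at each vertex of its support -/
lemma cycle_two {a : W} {c : T.Walk a a} (hc : c.IsCycle) {x : W} (hx : x ∈ c.support) :
    ∃ y z : W, y ≠ z ∧ s(x, y) ∈ c.edges ∧ s(x, z) ∈ c.edges ∧
      ∀ w, s(x, w) ∈ c.edges → w = y ∨ w = z := by
  have hc' := hc.rotate hx
  have hmem : ∀ e : Sym2 W, e ∈ (c.rotate x hx).edges ↔ e ∈ c.edges :=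
    fun e => (c.rotate_edges x hx).mem_iff
  obtain ⟨y₀, h1, q, hq⟩ := Walk.not_nil_iff.mp
    (fun hn => hc'.ne_nil hn.eq_nil : ¬ (c.rotate x hx).Nil)
  rw [hq] at hc' hmem
  obtain ⟨hqp, hqe⟩ := (Walk.cons_isCycle_iff q h1).mp hc'
  have hqnn : ¬ q.Nil := fun hn => T.loopless.irrefl x (hn.eq ▸ h1)
  have hqrnn : ¬ q.reverse.Nil := by
    rw [Walk.nil_iff_length_eq, Walk.length_reverse, ← Walk.nil_iff_length_eq]
    exact hqnn
  obtain ⟨z, h2, q2, hq2⟩ := Walk.not_nil_iff.mp hqrnn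
  have hz : s(x, z) ∈ q.edges := by
    have : s(x, z) ∈ q.reverse.edges := by rw [hq2]; simp
    rwa [Walk.edges_reverse, List.mem_reverse] at this
  have hyz : y₀ ≠ z := by rintro rfl; exact hqe hz
  refine ⟨y₀, z, hyz, ?_, ?_, ?_⟩
  · rw [← hmem]; simp
  · rw [← hmem]; simp [hz]
  · intro w hw
    rw [← hmem, Walk.edges_cons, List.mem_cons] at hw
    rcases hw with hw | hw
    · left; exact (Sym2.congr_right.mp hw)
    · right
      have hw' : s(x, w) ∈ q.reverse.edges := by
        rw [Walk.edges_reverse, List.mem_reverse]; exact hw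
      rw [hq2] at hw'
      have := edge_start h2 q2 (by rw [← hq2]; exact hqp.reverse) hw' (by simp)
      exact Sym2.congr_right.mp this


lemma loop_path_nil {x : W} {q : T.Walk x x} (hp : q.IsPath) : q = Walk.nil := by
  by_contra hn
  obtain ⟨y, h, q', rfl⟩ := Walk.not_nil_iff.mp (fun h => hn h.eq_nil)
  have := (Walk.cons_isPath_iff _ _).mp hp
  exact this.2 (q'.end_mem_support)

lemma cable_big_start {x f : W} {q : T.Walk x f} (hp : q.IsPath) (hxB : x ∈ B)
    (hcond : ∀ w ∈ q.support, w ≠ f → w ∉ B) : x = f ∧ q.edges = [] := by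
  have hxf : x = f := by
    by_contra hne
    exact hcond x q.start_mem_support hne hxB
  subst hxf
  exact ⟨rfl, by rw [loop_path_nil hp]; rfl⟩

lemma force_core (hB : NoThree T B) :
    ∀ (n : ℕ) {u x f₁ f₂ : W} (h₁ h₂ : T.Adj u x) (q₁ : T.Walk x f₁) (q₂ : T.Walk x f₂),
      q₁.length ≤ n →
      (Walk.cons h₁ q₁).IsPath → (Walk.cons h₂ q₂).IsPath →
      f₁ ∈ B → f₂ ∈ B →
      (∀ w ∈ q₁.support, w ≠ f₁ → w ∉ B) → (∀ w ∈ q₂.support, w ≠ f₂ → w ∉ B) →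
      f₁ = f₂ ∧ (Walk.cons h₁ q₁).edges = (Walk.cons h₂ q₂).edges := by
  intro n
  induction n with
  | zero =>
    intro u x f₁ f₂ h₁ h₂ q₁ q₂ hlen hp₁ hp₂ hf₁ hf₂ hc₁ hc₂
    have hq₁nil : q₁.Nil := Walk.nil_iff_length_eq.mpr (Nat.le_zero.mp hlen)
    have hxf₁ : x = f₁ := hq₁nil.eq
    have hxB : x ∈ B := hxf₁ ▸ hf₁
    obtain ⟨hxf₂, he₂⟩ := cable_big_start ((Walk.cons_isPath_iff _ _).mp hp₂).1 hxB hc₂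
    obtain ⟨-, he₁⟩ := cable_big_start ((Walk.cons_isPath_iff _ _).mp hp₁).1 hxB hc₁
    exact ⟨hxf₁ ▸ hxf₂, by simp [Walk.edges_cons, he₁, he₂]⟩
  | succ n ih =>
    intro u x f₁ f₂ h₁ h₂ q₁ q₂ hlen hp₁ hp₂ hf₁ hf₂ hc₁ hc₂
    by_cases hxB : x ∈ B
    · obtain ⟨hxf₁, he₁⟩ := cable_big_start ((Walk.cons_isPath_iff _ _).mp hp₁).1 hxB hc₁
      obtain ⟨hxf₂, he₂⟩ := cable_big_start ((Walk.cons_isPath_iff _ _).mp hp₂).1 hxB hc₂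
      exact ⟨hxf₁ ▸ hxf₂, by simp [Walk.edges_cons, he₁, he₂]⟩
    · have hxf₁ : x ≠ f₁ := fun h => hxB (h ▸ hf₁)
      have hxf₂ : x ≠ f₂ := fun h => hxB (h ▸ hf₂)
      obtain ⟨y₁, h₁', q₁', rfl⟩ := (Walk.not_nil_iff (p := q₁)).mp (Walk.not_nil_of_ne hxf₁)
      obtain ⟨y₂, h₂', q₂', rfl⟩ := (Walk.not_nil_iff (p := q₂)).mp (Walk.not_nil_of_ne hxf₂)
      have hu₁ : u ∉ (Walk.cons h₁' q₁').support := ((Walk.cons_isPath_iff _ _).mp hp₁).2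
      have hu₂ : u ∉ (Walk.cons h₂' q₂').support := ((Walk.cons_isPath_iff _ _).mp hp₂).2
      have hy : y₁ = y₂ := by
        rcases hB x hxB y₁ y₂ u h₁' h₂' h₁.symm with h | h | h
        · exact h
        · exact absurd (Walk.support_cons _ _ ▸ List.mem_cons_of_mem _
            (show u ∈ q₁'.support by rw [← h]; exact q₁'.start_mem_support)) hu₁
        · exact absurd (Walk.support_cons _ _ ▸ List.mem_cons_of_mem _
            (show u ∈ q₂'.support by rw [← h]; exact q₂'.start_mem_support)) hu₂
      subst hy
      have hres := ih h₁' h₂' q₁' q₂' (by simpa using hlen)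
        ((Walk.cons_isPath_iff _ _).mp hp₁).1 ((Walk.cons_isPath_iff _ _).mp hp₂).1 hf₁ hf₂
        (fun w hw hwf => hc₁ w (by simp [Walk.support_cons, hw]) hwf)
        (fun w hw hwf => hc₂ w (by simp [Walk.support_cons, hw]) hwf)
      exact ⟨hres.1, by simp only [Walk.edges_cons, hres.2]⟩

lemma link_cond {v f : W} {θ : T.Walk v f} (l : IsLink T B θ) :
    θ.IsPath ∧ v ≠ f ∧ v ∈ B ∧ f ∈ B ∧ ∀ w ∈ θ.support, w ≠ v → w ≠ f → w ∉ B := l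

lemma force (hB : NoThree T B) {v x f₁ f₂ : W} (h₁ h₂ : T.Adj v x)
    {q₁ : T.Walk x f₁} {q₂ : T.Walk x f₂}
    (l₁ : IsLink T B (Walk.cons h₁ q₁)) (l₂ : IsLink T B (Walk.cons h₂ q₂)) :
    f₁ = f₂ ∧ (Walk.cons h₁ q₁).edges = (Walk.cons h₂ q₂).edges := by
  have hv₁ : v ∉ q₁.support := ((Walk.cons_isPath_iff _ _).mp l₁.1).2
  have hv₂ : v ∉ q₂.support := ((Walk.cons_isPath_iff _ _).mp l₂.1).2
  exact force_core hB q₁.length h₁ h₂ q₁ q₂ le_rfl l₁.1 l₂.1 l₁.2.2.2.1 l₂.2.2.2.1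
    (fun w hw hwf => l₁.2.2.2.2 w (by simp [Walk.support_cons, hw])
      (fun h => hv₁ (h ▸ hw)) hwf)
    (fun w hw hwf => l₂.2.2.2.2 w (by simp [Walk.support_cons, hw])
      (fun h => hv₂ (h ▸ hw)) hwf)


lemma to_first_big {t u : W} (p : T.Walk t u) :
    p.IsPath → u ∈ B → t ∉ B →
    ∃ (f y : W) (h' : T.Adj t y) (q : T.Walk y f),
      (Walk.cons h' q).IsPath ∧ f ∈ B ∧
      (∀ w ∈ (Walk.cons h' q).support, w ≠ f → w ∉ B) ∧
      (∀ w ∈ (Walk.cons h' q).support, w ∈ p.support) := by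
  induction p with
  | nil => intro _ hu ht; exact absurd hu ht
  | @cons t y u h p' ih =>
    intro hp hu ht
    by_cases hyB : y ∈ B
    · refine ⟨y, y, h, Walk.nil, ?_, hyB, ?_, ?_⟩
      · rw [Walk.cons_isPath_iff]
        exact ⟨Walk.IsPath.nil, by simp [h.ne]⟩
      · intro w hw hwf
        simp only [Walk.support_cons, Walk.support_nil, List.mem_cons,
          List.mem_singleton] at hw
        rcases hw with rfl | rfl | h'
        · exact ht
        · exact absurd rfl hwf
        · exact absurd h' List.not_mem_nil
      · intro w hw
        simp only [Walk.support_cons, Walk.support_nil, List.mem_cons,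
          List.mem_singleton] at hw ⊢
        rcases hw with rfl | rfl | h'
        · exact Or.inl rfl
        · exact Or.inr p'.start_mem_support
        · exact absurd h' List.not_mem_nil
    · obtain ⟨f, y', h', q, hq, hf, hcond, hsub⟩ := ih hp.of_cons hu hyB
      have htq : t ∉ (Walk.cons h' q).support :=
        fun hm => ((Walk.cons_isPath_iff _ _).mp hp).2 (hsub t hm)
      refine ⟨f, y, h, Walk.cons h' q, ?_, hf, ?_, ?_⟩
      · rw [Walk.cons_isPath_iff]; exact ⟨hq, htq⟩
      · intro w hw hwf
        rw [Walk.support_cons, List.mem_cons] at hw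
        rcases hw with rfl | hw
        · exact ht
        · exact hcond w hw hwf
      · intro w hw
        rw [Walk.support_cons, List.mem_cons] at hw
        rw [Walk.support_cons, List.mem_cons]
        rcases hw with rfl | hw
        · exact Or.inl rfl
        · exact Or.inr (hsub w hw)

lemma absorb_aux (hB : NoThree T B) {a : W} {c : T.Walk a a} (hc : c.IsCycle)
    {x f : W} (q : T.Walk x f) :
    q.IsPath → (∀ w ∈ q.support, w ≠ f → w ∉ B) →
    ∀ u : W, s(u, x) ∈ c.edges → u ∉ q.support → ∀ e ∈ q.edges, e ∈ c.edges := by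
  induction q with
  | nil => simp
  | @cons x y f h q' ih =>
    intro hp hcond u hu hus e he
    have hxf : x ≠ f := by
      rintro rfl
      simpa using congrArg Walk.length (loop_path_nil hp)
    have hxB : x ∉ B := hcond x (by rw [Walk.support_cons]; exact List.mem_cons_self) hxf
    have hxc : x ∈ c.support := c.snd_mem_support_of_mem_edges hu
    obtain ⟨y₁, z₁, hyz, hy₁, hz₁, _⟩ := cycle_two hc hxc
    have hyc : s(x, y) ∈ c.edges := by
      rcases hB x hxB y₁ z₁ y (c.adj_of_mem_edges hy₁) (c.adj_of_mem_edges hz₁) h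
        with h' | h' | h'
      · exact absurd h' hyz
      · rw [← h']; exact hy₁
      · rw [← h']; exact hz₁
    rw [Walk.edges_cons, List.mem_cons] at he
    rcases he with rfl | he'
    · exact hyc
    · refine ih hp.of_cons ?_ x (by rwa [Sym2.eq_swap] at hyc ⊢) ?_ e he'
      · intro w hw hwf
        exact hcond w (by rw [Walk.support_cons]; exact List.mem_cons_of_mem _ hw) hwf
      · exact ((Walk.cons_isPath_iff _ _).mp hp).2

lemma absorb (hB : NoThree T B) {a : W} {c : T.Walk a a} (hc : c.IsCycle)
    {v f : W} (θ : T.Walk v f) :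
    θ.IsPath → (∀ w ∈ θ.support, w ≠ v → w ≠ f → w ∉ B) →
    ∀ g, g ∈ θ.edges → g ∈ c.edges → ∀ e ∈ θ.edges, e ∈ c.edges := by
  induction θ with
  | nil => simp
  | @cons v x f h θ' ih =>
    intro hp hcond g hg hgc e he
    have hvθ' : v ∉ θ'.support := ((Walk.cons_isPath_iff _ _).mp hp).2
    by_cases hxf : x = f
    · subst hxf
      have : θ' = Walk.nil := loop_path_nil hp.of_cons
      subst this
      simp only [Walk.edges_cons, Walk.edges_nil, List.mem_singleton,
        List.mem_cons, List.not_mem_nil, or_false] at he hg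
      subst he; subst hg; exact hgc
    · have hxB : x ∉ B :=
        hcond x (by rw [Walk.support_cons]; exact List.mem_cons_of_mem _ θ'.start_mem_support)
          (fun hxv => h.ne (hxv.symm)) hxf
      have hcond' : ∀ w ∈ θ'.support, w ≠ f → w ∉ B := by
        intro w hw hwf
        exact hcond w (by rw [Walk.support_cons]; exact List.mem_cons_of_mem _ hw)
          (fun hwv => hvθ' (hwv ▸ hw)) hwf
      rw [Walk.edges_cons, List.mem_cons] at hg
      rcases hg with rfl | hg'
      · -- g = s(v,x) ∈ c.edges : propagate forward
        rw [Walk.edges_cons, List.mem_cons] at he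
        rcases he with rfl | he'
        · exact hgc
        · exact absorb_aux hB hc θ' hp.of_cons hcond' v
            (by rwa [Sym2.eq_swap] at hgc ⊢) hvθ' e he'
      · -- g deeper
        have hall : ∀ e ∈ θ'.edges, e ∈ c.edges := by
          refine ih hp.of_cons ?_ g hg' hgc
          intro w hw hwx hwf
          exact hcond' w hw hwf
        obtain ⟨y, h', θ'', hθ''⟩ := (Walk.not_nil_iff (p := θ')).mp (Walk.not_nil_of_ne hxf)
        have hfirst : s(x, y) ∈ c.edges := hall _ (by rw [hθ'']; simp)
        have hxc : x ∈ c.support := c.fst_mem_support_of_mem_edges hfirst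
        obtain ⟨y₁, z₁, hyz, hy₁, hz₁, _⟩ := cycle_two hc hxc
        have hvc : s(x, v) ∈ c.edges := by
          rcases hB x hxB y₁ z₁ v (c.adj_of_mem_edges hy₁) (c.adj_of_mem_edges hz₁) h.symm
            with h'' | h'' | h''
          · exact absurd h'' hyz
          · rw [← h'']; exact hy₁
          · rw [← h'']; exact hz₁
        rw [Walk.edges_cons, List.mem_cons] at he
        rcases he with rfl | he'
        · rwa [Sym2.eq_swap]
        · exact hall e he'


lemma link_reverse {x y : W} {θ : T.Walk x y} (l : IsLink T B θ) : IsLink T B θ.reverse :=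
  ⟨l.1.reverse, l.2.1.symm, l.2.2.2.1, l.2.2.1, fun w hw h1 h2 =>
    l.2.2.2.2 w (by rwa [Walk.support_reverse, List.mem_reverse] at hw) h2 h1⟩

lemma pe_adj (hpa : GoodPa T r pa) {x y : W} (h : s(x, y) ∈ PE r pa) : T.Adj x y := by
  obtain ⟨z, hz, he⟩ := h
  rw [Sym2.eq_iff] at he
  rcases he with ⟨rfl, rfl⟩ | ⟨h1, rfl⟩
  · exact (hpa x hz).1
  · exact h1 ▸ (hpa y hz).1.symm

lemma pe_diff (hpa : GoodPa T r pa) {x y : W} (h : s(x, y) ∈ PE r pa) :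
    T.dist y r + 1 = T.dist x r ∨ T.dist x r + 1 = T.dist y r := by
  obtain ⟨z, hz, he⟩ := h
  rw [Sym2.eq_iff] at he
  rcases he with ⟨rfl, rfl⟩ | ⟨h1, rfl⟩
  · exact Or.inl (hpa x hz).2
  · exact Or.inr (h1 ▸ (hpa y hz).2)

lemma pe_desc (hpa : GoodPa T r pa) {x y : W} (h : s(x, y) ∈ PE r pa)
    (hd : T.dist y r < T.dist x r) : x ≠ r ∧ y = pa x := by
  obtain ⟨z, hz, he⟩ := h
  rw [Sym2.eq_iff] at he
  rcases he with ⟨rfl, rfl⟩ | ⟨h1, rfl⟩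
  · exact ⟨hz, rfl⟩
  · exfalso
    have := (hpa y hz).2
    rw [← h1] at this
    omega

lemma to_root (hpa : GoodPa T r pa) :
    ∀ (n : ℕ) (v : W), T.dist v r ≤ n → ∃ w : T.Walk v r, ∀ e ∈ w.edges, e ∈ PE r pa := by
  intro n
  induction n with
  | zero =>
    intro v hv
    by_cases hvr : v = r
    · subst hvr; exact ⟨Walk.nil, by simp⟩
    · exact absurd (Nat.le_zero.mp hv) (by have := (hpa v hvr).2; omega)
  | succ n ih =>
    intro v hv
    by_cases hvr : v = r
    · subst hvr; exact ⟨Walk.nil, by simp⟩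
    · obtain ⟨hadj, hd⟩ := hpa v hvr
      obtain ⟨w', hw'⟩ := ih (pa v) (by omega)
      refine ⟨Walk.cons hadj w', ?_⟩
      intro e he
      rw [Walk.edges_cons, List.mem_cons] at he
      rcases he with rfl | he
      · exact ⟨v, hvr, rfl⟩
      · exact hw' e he

lemma mono (hpa : GoodPa T r pa) :
    ∀ {x y b : W} (h : T.Adj x y) (q : T.Walk y b), (Walk.cons h q).IsPath →
      (∀ e ∈ (Walk.cons h q).edges, e ∈ PE r pa) →
      T.dist x r + 1 = T.dist y r →
      ∀ w ∈ (Walk.cons h q).support, w ≠ x →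
        ∃ u, s(w, u) ∈ (Walk.cons h q).edges ∧ T.dist u r + 1 = T.dist w r := by
  intro x y b h q
  induction q generalizing x with
  | nil =>
    intro hp hpe hd w hw hwx
    simp only [Walk.support_cons, Walk.support_nil, List.mem_cons, List.mem_singleton] at hw
    rcases hw with rfl | rfl | h'
    · exact absurd rfl hwx
    · refine ⟨x, ?_, hd⟩
      rw [Sym2.eq_swap]
      simp [Walk.edges_cons]
    · exact absurd h' List.not_mem_nil
  | @cons y z b h' q' ih =>
    intro hp hpe hd w hw hwx
    have hyz : T.dist y r + 1 = T.dist z r := by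
      have hpe' : s(y, z) ∈ PE r pa := hpe _ (by simp [Walk.edges_cons])
      rcases pe_diff hpa hpe' with hdd | hdd
      · exfalso
        obtain ⟨hyr, hzpa⟩ := pe_desc hpa hpe' (by omega)
        have hxy : s(y, x) ∈ PE r pa := by
          rw [Sym2.eq_swap]; exact hpe _ (by simp [Walk.edges_cons])
        obtain ⟨-, hxpa⟩ := pe_desc hpa hxy (by omega)
        have hxz : x = z := hxpa.symm ▸ hzpa.symm ▸ rfl
        exact ((Walk.cons_isPath_iff _ _).mp hp).2
          (by rw [hxz, Walk.support_cons]; exact List.mem_cons_of_mem _ q'.start_mem_support)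
      · exact hdd
    simp only [Walk.support_cons, List.mem_cons] at hw
    rcases hw with rfl | hw
    · exact absurd rfl hwx
    · by_cases hwy : w = y
      · subst hwy
        refine ⟨x, ?_, hd⟩
        rw [Sym2.eq_swap, Walk.edges_cons]
        exact List.mem_cons_self
      · obtain ⟨u, hu, hud⟩ := ih h' hp.of_cons
          (fun e he => hpe e (by rw [Walk.edges_cons]; exact List.mem_cons_of_mem _ he)) hyz
          w (by rw [Walk.support_cons]
                rcases hw with rfl | hw
                · exact List.mem_cons_self
                · exact List.mem_cons_of_mem _ hw) hwy
        exact ⟨u, by rw [Walk.edges_cons]; exact List.mem_cons_of_mem _ hu, hud⟩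

lemma vshape (hpa : GoodPa T r pa) :
    ∀ {a b : W} (π : T.Walk a b), π.IsPath → (∀ e ∈ π.edges, e ∈ PE r pa) →
      ∃ w₀ : W, ∀ w ∈ π.support, w ≠ w₀ →
        ∃ u, s(w, u) ∈ π.edges ∧ T.dist u r + 1 = T.dist w r := by
  intro a b π
  induction π with
  | nil =>
    rename_i u
    intro _ _
    refine ⟨u, fun w hw hne => absurd ?_ hne⟩
    rw [Walk.support_nil, List.mem_singleton] at hw
    exact hw
  | @cons a x b h π' ih =>
    intro hp hpe
    have hpe' : s(a, x) ∈ PE r pa := hpe _ (by simp [Walk.edges_cons])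
    rcases pe_diff hpa hpe' with hdd | hdd
    · -- descending first edge
      obtain ⟨w₀, hw₀⟩ := ih hp.of_cons
        (fun e he => hpe e (by rw [Walk.edges_cons]; exact List.mem_cons_of_mem _ he))
      refine ⟨w₀, ?_⟩
      intro w hw hne
      rw [Walk.support_cons, List.mem_cons] at hw
      rcases hw with rfl | hw
      · exact ⟨x, by rw [Walk.edges_cons]; exact List.mem_cons_self, hdd⟩
      · obtain ⟨u, hu, hud⟩ := hw₀ w hw hne
        exact ⟨u, by rw [Walk.edges_cons]; exact List.mem_cons_of_mem _ hu, hud⟩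
    · -- ascending first edge
      exact ⟨a, mono hpa h π' hp hpe hdd⟩

lemma fund_cycle (hpa : GoodPa T r pa) {g : Sym2 W} (hg : g ∈ T.edgeSet)
    (hgt : g ∉ PE r pa) :
    ∃ (p₀ q₀ : W) (hpq : T.Adj p₀ q₀) (π : T.Walk q₀ p₀), π.IsPath ∧
      (∀ e ∈ π.edges, e ∈ PE r pa) ∧ s(p₀, q₀) ∉ π.edges ∧ g = s(p₀, q₀) ∧
      (Walk.cons hpq π).IsCycle := by
  induction g using Sym2.ind with
  | _ p q =>
    have hpq : T.Adj p q := hg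
    obtain ⟨w₁, hw₁⟩ := to_root hpa (T.dist q r) q le_rfl
    obtain ⟨w₂, hw₂⟩ := to_root hpa (T.dist p r) p le_rfl
    set ω : T.Walk q p := w₁.append w₂.reverse with hω
    have hπe : ∀ e ∈ ω.bypass.edges, e ∈ PE r pa := by
      intro e he
      have := ω.edges_bypass_subset he
      rw [hω, Walk.edges_append, List.mem_append] at this
      rcases this with h' | h'
      · exact hw₁ e h'
      · rw [Walk.edges_reverse, List.mem_reverse] at h'
        exact hw₂ e h'
    have hnpe : s(p, q) ∉ ω.bypass.edges := fun hmem => hgt (hπe _ hmem)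
    exact ⟨p, q, hpq, ω.bypass, ω.bypass_isPath, hπe, hnpe, rfl,
      (Walk.cons_isCycle_iff _ _).mpr ⟨ω.bypass_isPath, hnpe⟩⟩


lemma assign_inj
    (hcac : ∀ (e : Sym2 W) (a b : W) (c₁ : T.Walk a a) (c₂ : T.Walk b b),
      c₁.IsCycle → c₂.IsCycle → e ∈ c₁.edges → e ∈ c₂.edges →
      {e' | e' ∈ c₁.edges} = {e' | e' ∈ c₂.edges})
    (hB : NoThree T B) {x₁ y₁ x₂ y₂ : W} {θ₁ : T.Walk x₁ y₁} {θ₂ : T.Walk x₂ y₂}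
    {w : W} {ph : Bool}
    (a₁ : Assigned T B pa θ₁ w ph) (a₂ : Assigned T B pa θ₂ w ph) :
    ∀ e, e ∈ θ₁.edges ↔ e ∈ θ₂.edges := by
  obtain ⟨-, f₁, θ₁', l₁, hiff₁, hph₁⟩ := a₁
  obtain ⟨-, f₂, θ₂', l₂, hiff₂, hph₂⟩ := a₂
  obtain ⟨z₁, hz₁, q₁, rfl⟩ := (Walk.not_nil_iff (p := θ₁')).mp (Walk.not_nil_of_ne l₁.2.1)
  obtain ⟨z₂, hz₂, q₂, rfl⟩ := (Walk.not_nil_iff (p := θ₂')).mp (Walk.not_nil_of_ne l₂.2.1)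
  suffices hz : z₁ = z₂ by
    subst hz
    have hfe := force hB hz₁ hz₂ l₁ l₂
    intro e
    rw [← hiff₁, ← hiff₂, hfe.2]
  cases ph with
  | true =>
    have e₁ : s(w, pa w) = s(w, z₁) := edge_start hz₁ q₁ l₁.1 hph₁ (Sym2.mem_mk_left _ _)
    have e₂ : s(w, pa w) = s(w, z₂) := edge_start hz₂ q₂ l₂.1 hph₂ (Sym2.mem_mk_left _ _)
    rw [← Sym2.congr_right.mp e₁, ← Sym2.congr_right.mp e₂]
  | false =>
    obtain ⟨a₁', c₁, hcyc₁, hsub₁, hpac₁, hpan₁⟩ := hph₁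
    obtain ⟨a₂', c₂, hcyc₂, hsub₂, hpac₂, hpan₂⟩ := hph₂
    have hciff : ∀ e : Sym2 W, e ∈ c₁.edges ↔ e ∈ c₂.edges := fun e =>
      Set.ext_iff.mp (hcac s(w, pa w) _ _ c₁ c₂ hcyc₁ hcyc₂ hpac₁ hpac₂) e
    have hz₁c : s(w, z₁) ∈ c₁.edges := hsub₁ _ (by simp [Walk.edges_cons])
    have hz₂c : s(w, z₂) ∈ c₁.edges := (hciff _).mpr (hsub₂ _ (by simp [Walk.edges_cons]))
    have hwc : w ∈ c₁.support := c₁.fst_mem_support_of_mem_edges hz₁c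
    obtain ⟨y, z, hyz, hy, hz, huniq⟩ := cycle_two hcyc₁ hwc
    have hz₁p : z₁ ≠ pa w := by
      rintro rfl
      exact hpan₁ (by simp [Walk.edges_cons])
    have hz₂p : z₂ ≠ pa w := by
      rintro rfl
      exact hpan₂ (by simp [Walk.edges_cons])
    rcases huniq _ hpac₁ with hp | hp <;> rcases huniq _ hz₁c with h1 | h1 <;>
      rcases huniq _ hz₂c with h2 | h2 <;>
      first
        | (exact h1.trans h2.symm)
        | (exact absurd (h1.trans hp.symm) hz₁p)
        | (exact absurd (h2.trans hp.symm) hz₂p)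

lemma assign_ex (hB : NoThree T B) (hpa : GoodPa T r pa) {v x f : W}
    (h : T.Adj v x) {q : T.Walk x f} (l : IsLink T B (Walk.cons h q)) :
    ∃ (w : W) (ph : Bool), Assigned T B pa (Walk.cons h q) w ph := by
  by_cases c1 : v ≠ r ∧ s(v, pa v) ∈ (Walk.cons h q).edges
  · exact ⟨v, true, Or.inl rfl, f, Walk.cons h q, l, fun e => Iff.rfl, c1.2⟩
  by_cases c2 : f ≠ r ∧ s(f, pa f) ∈ (Walk.cons h q).edges
  · refine ⟨f, true, Or.inr rfl, v, (Walk.cons h q).reverse, link_reverse l, ?_, ?_⟩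
    · intro e; rw [Walk.edges_reverse, List.mem_reverse]
    · show s(f, pa f) ∈ (Walk.cons h q).reverse.edges
      rw [Walk.edges_reverse, List.mem_reverse]; exact c2.2
  · have hg : ∃ g ∈ (Walk.cons h q).edges, g ∉ PE r pa := by
      by_contra hall
      push_neg at hall
      have h1 : s(v, x) ∈ PE r pa := hall _ (by simp [Walk.edges_cons])
      rcases pe_diff hpa h1 with hdd | hdd
      · obtain ⟨hvr, hxpa⟩ := pe_desc hpa h1 (by omega)
        exact c1 ⟨hvr, by rw [← hxpa]; simp [Walk.edges_cons]⟩
      · obtain ⟨u, hu, hud⟩ := mono hpa h q l.1 hall hdd f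
          (Walk.end_mem_support _) (Ne.symm l.2.1)
        obtain ⟨hfr, hupa⟩ := pe_desc hpa (hall _ hu) (by omega)
        exact c2 ⟨hfr, by rw [← hupa]; exact hu⟩
    obtain ⟨g, hgθ, hgpe⟩ := hg
    obtain ⟨p₀, q₀, hpq, π, hπp, hπe, hπn, rfl, hcyc⟩ :=
      fund_cycle hpa ((Walk.cons h q).edges_subset_edgeSet hgθ) hgpe
    have habs : ∀ e ∈ (Walk.cons h q).edges, e ∈ (Walk.cons hpq π).edges :=
      absorb hB hcyc (Walk.cons h q) l.1 l.2.2.2.2 s(p₀, q₀) hgθ (by simp [Walk.edges_cons])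
    obtain ⟨w₀, hw₀⟩ := vshape hpa π hπp hπe
    have hmemπ : ∀ u' : W, u' ∈ (Walk.cons hpq π).support → u' ∈ π.support := by
      intro u' hu'
      rw [Walk.support_cons, List.mem_cons] at hu'
      rcases hu' with rfl | hu'
      · exact π.end_mem_support
      · exact hu'
    have hvπ : v ∈ π.support :=
      hmemπ v ((Walk.cons hpq π).fst_mem_support_of_mem_edges
        (habs s(v, x) (by simp [Walk.edges_cons])))
    have hfπ : f ∈ π.support := by
      obtain ⟨z, hzadj, qr, hqr⟩ :=
        (Walk.not_nil_iff (p := (Walk.cons h q).reverse)).mp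
          (Walk.not_nil_of_ne (Ne.symm l.2.1))
      have hfz : s(f, z) ∈ (Walk.cons h q).edges := by
        rw [← List.mem_reverse, ← Walk.edges_reverse, hqr]
        simp [Walk.edges_cons]
      exact hmemπ f ((Walk.cons hpq π).fst_mem_support_of_mem_edges (habs _ hfz))
    by_cases hvw : v = w₀
    · have hfw : f ≠ w₀ := fun h' => l.2.1 (hvw.trans h'.symm)
      obtain ⟨u, hu, hud⟩ := hw₀ f hfπ hfw
      obtain ⟨hfr, hupa⟩ := pe_desc hpa (hπe _ hu) (by omega)
      refine ⟨f, false, Or.inr rfl, v, (Walk.cons h q).reverse, link_reverse l,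
        (fun e => by rw [Walk.edges_reverse, List.mem_reverse]), ?_⟩
      refine ⟨p₀, Walk.cons hpq π, hcyc, ?_, ?_, ?_⟩
      · intro e he
        rw [Walk.edges_reverse, List.mem_reverse] at he
        exact habs e he
      · rw [← hupa]
        rw [Walk.edges_cons]
        exact List.mem_cons_of_mem _ hu
      · intro hmem
        rw [Walk.edges_reverse, List.mem_reverse] at hmem
        exact c2 ⟨hfr, hmem⟩
    · obtain ⟨u, hu, hud⟩ := hw₀ v hvπ hvw
      obtain ⟨hvr, hupa⟩ := pe_desc hpa (hπe _ hu) (by omega)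
      refine ⟨v, false, Or.inl rfl, f, Walk.cons h q, l, fun e => Iff.rfl, ?_⟩
      refine ⟨p₀, Walk.cons hpq π, hcyc, habs, ?_, ?_⟩
      · rw [← hupa, Walk.edges_cons]
        exact List.mem_cons_of_mem _ hu
      · intro hmem
        exact c1 ⟨hvr, hmem⟩


section Gside
variable {V : Type u} {W : Type v} [DecidableEq W]

lemma concat_path {G' : SimpleGraph V} {u v' w : V} {p : G'.Walk u v'} (hp : p.IsPath)
    (h : G'.Adj v' w) (hw : w ∉ p.support) : (p.concat h).IsPath := by
  have : (p.concat h).reverse = Walk.cons h.symm p.reverse := by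
    rw [Walk.reverse_concat]
  have hrev : (p.concat h).reverse.IsPath := by
    rw [this, Walk.cons_isPath_iff]
    exact ⟨hp.reverse, by rwa [Walk.support_reverse, List.mem_reverse]⟩
  rw [← Walk.reverse_reverse (p.concat h)]; exact hrev.reverse

lemma nothree_of_contraction (G : SimpleGraph V) (T : SimpleGraph W)
    (hG : TwoConnected G) (hT : IsCactus T) (ψ : V → W) (hψ : IsContraction G T ψ) :
    NoThree T {t : W | BigWitness ψ t} := by
  intro t ht a b c hta htb htc
  by_contra hcon
  push_neg at hcon
  obtain ⟨hab, hac, hbc⟩ := hcon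
  -- the witness set of t is a single vertex x
  obtain ⟨x, hx⟩ := hψ.1 t
  have huniq : ∀ v : V, ψ v = t → v = x := by
    intro v hv
    by_contra hvx
    exact ht ⟨v, x, hvx, hv, hx⟩
  -- walks avoiding t
  have avoid : ∀ a' b' : W, a' ≠ t → b' ≠ t → ∃ w : T.Walk a' b', t ∉ w.support := by
    intro a' b' ha' hb'
    obtain ⟨u, hu⟩ := hψ.1 a'
    obtain ⟨v, hv⟩ := hψ.1 b'
    have hux : u ∈ ({x}ᶜ : Set V) := by
      simp only [Set.mem_compl_iff, Set.mem_singleton_iff]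
      intro huxe; exact ha' (by rw [← hu, huxe, hx])
    have hvx : v ∈ ({x}ᶜ : Set V) := by
      simp only [Set.mem_compl_iff, Set.mem_singleton_iff]
      intro hvxe; exact hb' (by rw [← hv, hvxe, hx])
    have proj : ∀ (s₁ s₂ : ↥({x}ᶜ : Set V)) (w : (G.induce ({x}ᶜ : Set V)).Walk s₁ s₂),
        ∃ ω : T.Walk (ψ s₁.1) (ψ s₂.1), ∀ z ∈ ω.support, z ≠ t := by
      intro s₁ s₂ w
      have hne : ∀ s : ↥({x}ᶜ : Set V), ψ s.1 ≠ t := by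
        intro s hs
        exact s.2 (by rw [Set.mem_singleton_iff]; exact huniq s.1 hs)
      induction w with
      | nil =>
        refine ⟨Walk.nil, ?_⟩
        intro z hz
        rw [Walk.support_nil, List.mem_singleton] at hz
        exact hz ▸ hne _
      | @cons s₁ s₂' s₃ hadj w' ih =>
        have hGadj : G.Adj s₁.1 s₂'.1 := hadj
        obtain ⟨ω, hω⟩ := ih
        by_cases heq : ψ s₁.1 = ψ s₂'.1
        · refine ⟨ω.copy heq.symm rfl, ?_⟩
          intro z hz
          rw [Walk.support_copy] at hz
          exact hω z hz
        · have hTadj : T.Adj (ψ s₁.1) (ψ s₂'.1) :=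
            (hψ.2.2 _ _).mpr ⟨heq, s₁.1, s₂'.1, hGadj, rfl, rfl⟩
          refine ⟨Walk.cons hTadj ω, ?_⟩
          intro z hz
          rw [Walk.support_cons, List.mem_cons] at hz
          rcases hz with rfl | hz
          · exact hne _
          · exact hω z hz
    obtain ⟨w⟩ := (hG.2.2 x).preconnected ⟨u, hux⟩ ⟨v, hvx⟩
    obtain ⟨ω, hω⟩ := proj _ _ w
    refine ⟨ω.copy hu hv, ?_⟩
    intro hmem
    rw [Walk.support_copy] at hmem
    exact hω t hmem rfl
  have hat : a ≠ t := hta.ne'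
  have hbt : b ≠ t := htb.ne'
  have hct : c ≠ t := htc.ne'
  obtain ⟨wab, hwab⟩ := avoid a b hat hbt
  obtain ⟨wac, hwac⟩ := avoid a c hat hct
  have hpab : wab.bypass.IsPath := wab.bypass_isPath
  have hpac : wac.bypass.IsPath := wac.bypass_isPath
  have htab : t ∉ wab.bypass.support := fun hm => hwab (wab.support_bypass_subset hm)
  have htac : t ∉ wac.bypass.support := fun hm => hwac (wac.support_bypass_subset hm)
  have mkcyc : ∀ (b' : W) (htb' : T.Adj t b') (p : T.Walk a b'), p.IsPath →
      t ∉ p.support → a ≠ b' → a ≠ t → b' ≠ t → (Walk.cons hta (p.concat htb'.symm)).IsCycle ∧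
        s(t, a) ∈ (Walk.cons hta (p.concat htb'.symm)).edges ∧
        (∀ e ∈ (Walk.cons hta (p.concat htb'.symm)).edges,
          e = s(t, a) ∨ e ∈ p.edges ∨ e = s(b', t)) ∧
        s(b', t) ∈ (Walk.cons hta (p.concat htb'.symm)).edges := by
    intro b' htb' p hp htp hab' hat' hb't
    have hcp : (p.concat htb'.symm).IsPath := concat_path hp htb'.symm htp
    have hedges : (p.concat htb'.symm).edges = p.edges ++ [s(b', t)] := by
      rw [Walk.edges_concat, List.concat_eq_append]
    have hta' : s(t, a) ∉ (p.concat htb'.symm).edges := by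
      rw [hedges, List.mem_append, List.mem_singleton]
      rintro (hm | hm)
      · exact htp (p.fst_mem_support_of_mem_edges hm)
      · rw [Sym2.eq_iff] at hm
        rcases hm with ⟨h1, h2⟩ | ⟨h1, h2⟩
        · exact hat' h2
        · exact hab' h2
    refine ⟨(Walk.cons_isCycle_iff _ _).mpr ⟨hcp, hta'⟩, by simp [Walk.edges_cons], ?_, ?_⟩
    · intro e he
      rw [Walk.edges_cons, List.mem_cons] at he
      rcases he with rfl | he
      · exact Or.inl rfl
      · rw [hedges, List.mem_append, List.mem_singleton] at he
        rcases he with he | rfl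
        · exact Or.inr (Or.inl he)
        · exact Or.inr (Or.inr rfl)
    · rw [Walk.edges_cons, hedges]
      simp
  obtain ⟨hcyc1, hmem1, hcases1, hlast1⟩ := mkcyc b htb wab.bypass hpab htab hab hat hbt
  obtain ⟨hcyc2, hmem2, hcases2, hlast2⟩ := mkcyc c htc wac.bypass hpac htac hac hat hct
  have hsets := hT.2 s(t, a) t t _ _ hcyc1 hcyc2 hmem1 hmem2
  have hct1 : s(c, t) ∈ (Walk.cons hta (wab.bypass.concat htb.symm)).edges :=
    (Set.ext_iff.mp hsets s(c, t)).mpr hlast2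
  rcases hcases1 _ hct1 with he | he | he
  · rw [Sym2.eq_iff] at he
    rcases he with ⟨h1, h2⟩ | ⟨h1, h2⟩
    · exact hct h1
    · exact hac h1.symm
  · exact htab (wab.bypass.snd_mem_support_of_mem_edges he)
  · rw [Sym2.eq_iff] at he
    rcases he with ⟨h1, h2⟩ | ⟨h1, h2⟩
    · exact hbc h1.symm
    · exact hct h1

end Gside

section LinkOfMid
variable {W : Type v} [DecidableEq W] {T : SimpleGraph W} {B : Set W}

lemma link_of_mid (hB : NoThree T B) {t t₁ t₂ : W} (ht : t ∉ B) (ht₁ : t₁ ∈ B)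
    (ht₂ : t₂ ∈ B) {p : T.Walk t₁ t₂} (hp : p.IsPath) (htp : t ∈ p.support)
    {b : W} (hbB : b ∈ B) (hadj : T.Adj t b) :
    ∃ (ff : W) (hadj' : T.Adj b t) (qq : T.Walk t ff),
      IsLink T B (Walk.cons hadj' qq) := by
  have hp₁ := hp.takeUntil htp
  have hp₂ := hp.dropUntil htp
  have hdisj : ∀ w : W, w ∈ (p.takeUntil t htp).support →
      w ∈ (p.dropUntil t htp).support → w = t := by
    intro w hw₁ hw₂
    have hspec := p.take_spec htp
    have hsupp : p.support = (p.takeUntil t htp).support ++ (p.dropUntil t htp).support.tail := by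
      conv_lhs => rw [← hspec]
      rw [Walk.support_append]
    have hnodup := hp.2
    rw [hsupp] at hnodup
    have hdis := List.disjoint_of_nodup_append hnodup
    by_contra hwt
    have : w ∈ (p.dropUntil t htp).support.tail := by
      have := (p.dropUntil t htp).support_eq_cons
      rw [this, List.mem_cons] at hw₂
      rcases hw₂ with rfl | hw₂
      · exact absurd rfl hwt
      · exact hw₂
    exact hdis hw₁ this
  have ht1ne : t ≠ t₁ := fun h => ht (h ▸ ht₁)
  have ht2ne : t ≠ t₂ := fun h => ht (h ▸ ht₂)
  obtain ⟨f₁, y₁, h₁, q₁, hc₁p, hf₁, hcond₁, hsub₁⟩ :=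
    to_first_big (p.takeUntil t htp).reverse hp₁.reverse ht₁ ht
  obtain ⟨f₂, y₂, h₂, q₂, hc₂p, hf₂, hcond₂, hsub₂⟩ :=
    to_first_big (p.dropUntil t htp) hp₂ ht₂ ht
  have hy₁p : y₁ ∈ (p.takeUntil t htp).support := by
    have hy₁mem : y₁ ∈ (Walk.cons h₁ q₁).support := by
      rw [Walk.support_cons]; exact List.mem_cons_of_mem _ q₁.start_mem_support
    have := hsub₁ y₁ hy₁mem
    rwa [Walk.support_reverse, List.mem_reverse] at this
  have hy₂p : y₂ ∈ (p.dropUntil t htp).support :=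
    hsub₂ y₂ (by rw [Walk.support_cons]; exact List.mem_cons_of_mem _ q₂.start_mem_support)
  have hy₁t : y₁ ≠ t := h₁.ne'
  have hy₂t : y₂ ≠ t := h₂.ne'
  have hy12 : y₁ ≠ y₂ := fun he => hy₁t (hdisj y₁ hy₁p (he ▸ hy₂p))
  have hbt : b ≠ t := hadj.ne'
  rcases hB t ht y₁ y₂ b h₁ h₂ hadj with he | he | he
  · exact absurd he hy12
  · -- b = y₁ : use cable₂
    subst he
    have hbnot : y₁ ∉ (Walk.cons h₂ q₂).support := by
      intro hm
      exact hy₁t (hdisj y₁ hy₁p (hsub₂ _ hm))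
    refine ⟨f₂, hadj.symm, Walk.cons h₂ q₂, ?_, ?_, hbB, hf₂, ?_⟩
    · rw [Walk.cons_isPath_iff]
      exact ⟨hc₂p, hbnot⟩
    · intro hbf
      exact hbnot (hbf ▸ (Walk.cons h₂ q₂).end_mem_support)
    · intro w hw hwb hwf
      rw [Walk.support_cons, List.mem_cons] at hw
      rcases hw with rfl | hw
      · exact absurd rfl hwb
      · exact hcond₂ w hw hwf
  · -- b = y₂ : use cable₁
    subst he
    have hbnot : y₂ ∉ (Walk.cons h₁ q₁).support := by
      intro hm
      have := hsub₁ _ hm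
      rw [Walk.support_reverse, List.mem_reverse] at this
      exact hy₂t (hdisj y₂ this hy₂p)
    refine ⟨f₁, hadj.symm, Walk.cons h₁ q₁, ?_, ?_, hbB, hf₁, ?_⟩
    · rw [Walk.cons_isPath_iff]
      exact ⟨hc₁p, hbnot⟩
    · intro hbf
      exact hbnot (hbf ▸ (Walk.cons h₁ q₁).end_mem_support)
    · intro w hw hwb hwf
      rw [Walk.support_cons, List.mem_cons] at hw
      rcases hw with rfl | hw
      · exact absurd rfl hwb
      · exact hcond₁ w hw hwf

end LinkOfMid

end CCC

/-- In a 2-connected graph contractible to a cactus `T`, at most `4 |T_B|` vertices of `T`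
lie on a path between two distinct vertices of `T_B` and are adjacent to a vertex of
`T_B`, where `T_B` is the set of vertices with big witness sets. -/
theorem stmt5 {V : Type u} {W : Type v} [Fintype V] [Fintype W]
    (G : SimpleGraph V) (T : SimpleGraph W) (hG : TwoConnected G) (hT : IsCactus T)
    (ψ : V → W) (hψ : IsContraction G T ψ) :
    {t : W | (∃ t₁ t₂ : W, BigWitness ψ t₁ ∧ BigWitness ψ t₂ ∧ t₁ ≠ t₂ ∧
        ∃ p : T.Walk t₁ t₂, p.IsPath ∧ t ∈ p.support) ∧
      ∃ t' : W, BigWitness ψ t' ∧ T.Adj t t'}.ncard ≤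
    4 * {t : W | BigWitness ψ t}.ncard := by
  classical
  set B : Set W := {t : W | BigWitness ψ t} with hBdef
  have hconn : T.Connected := hT.1
  have hcac := hT.2
  have hB3 : CCC.NoThree T B := CCC.nothree_of_contraction G T hG hT ψ hψ
  obtain ⟨r⟩ : Nonempty W := hconn.nonempty
  have hpa_ex : ∀ v : W, ∃ u : W, v = r ∨ (T.Adj v u ∧ T.dist u r + 1 = T.dist v r) := by
    intro v
    by_cases hvr : v = r
    · exact ⟨r, Or.inl hvr⟩
    · obtain ⟨p, hp⟩ := hconn.exists_walk_length_eq_dist v r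
      have hd0 : T.dist v r ≠ 0 := fun h0 => hvr (hconn.dist_eq_zero_iff.mp h0)
      obtain ⟨u, hadj, p', rfl⟩ := (Walk.not_nil_iff (p := p)).mp
        (by rw [Walk.nil_iff_length_eq, hp]; exact hd0)
      obtain ⟨pu, hpu⟩ := hconn.exists_walk_length_eq_dist u r
      have h1 : T.dist u r ≤ p'.length := SimpleGraph.dist_le p'
      have h2 : T.dist v r ≤ T.dist u r + 1 := by
        have := SimpleGraph.dist_le (Walk.cons hadj pu)
        rwa [Walk.length_cons, hpu] at this
      have h3 : p'.length + 1 = T.dist v r := by rw [← hp, Walk.length_cons]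
      exact ⟨u, Or.inr ⟨hadj, by omega⟩⟩
  set pa : W → W := fun v => (hpa_ex v).choose with hpadef
  have hpa : CCC.GoodPa T r pa := by
    intro v hvr
    rcases (hpa_ex v).choose_spec with h | h
    · exact absurd h hvr
    · exact h
  set P : W → W × Bool × Bool → Prop := fun t z =>
    ∃ (vv xx ff : W) (hadj : T.Adj vv xx) (qq : T.Walk xx ff),
      CCC.IsLink T B (Walk.cons hadj qq) ∧
      CCC.Assigned T B pa (Walk.cons hadj qq) z.1 z.2.1 ∧
      ((t ∈ B ∧ vv = t ∧ xx ∈ B) ∨ (t ∉ B ∧ xx = t)) ∧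
      z.2.2 = decide (vv = z.1) with hPdef
  have hPex : ∀ t, t ∈ {t : W | (∃ t₁ t₂ : W, BigWitness ψ t₁ ∧ BigWitness ψ t₂ ∧ t₁ ≠ t₂ ∧
      ∃ p : T.Walk t₁ t₂, p.IsPath ∧ t ∈ p.support) ∧
      ∃ t' : W, BigWitness ψ t' ∧ T.Adj t t'} → ∃ z, P t z := by
    rintro t ⟨⟨t₁, t₂, hb₁, hb₂, hne12, p, hp, htp⟩, t', hbt', hadj'⟩
    have hb₁' : t₁ ∈ B := hb₁
    have hb₂' : t₂ ∈ B := hb₂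
    have hbt'' : t' ∈ B := hbt'
    by_cases htB : t ∈ B
    · have hlink : CCC.IsLink T B (Walk.cons hadj' (Walk.nil : T.Walk t' t')) := by
        refine ⟨?_, hadj'.ne, htB, hbt'', ?_⟩
        · rw [Walk.cons_isPath_iff]
          refine ⟨Walk.IsPath.nil, ?_⟩
          rw [Walk.support_nil, List.mem_singleton]
          exact hadj'.ne
        · intro w hw h1 h2
          rw [Walk.support_cons, Walk.support_nil] at hw
          rcases List.mem_cons.mp hw with rfl | hw2
          · exact absurd rfl h1
          · exact absurd (List.mem_singleton.mp hw2) h2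
      obtain ⟨w, ph, hass⟩ := CCC.assign_ex hB3 hpa hadj' hlink
      exact ⟨(w, ph, decide (t = w)), t, t', t', hadj', Walk.nil, hlink, hass,
        Or.inl ⟨htB, rfl, hbt''⟩, rfl⟩
    · obtain ⟨ff, hadj2, qq, hlink⟩ :=
        CCC.link_of_mid hB3 htB hb₁' hb₂' hp htp hbt'' hadj'
      obtain ⟨w, ph, hass⟩ := CCC.assign_ex hB3 hpa hadj2 hlink
      exact ⟨(w, ph, decide (t' = w)), t', t, ff, hadj2, qq, hlink, hass,
        Or.inr ⟨htB, rfl⟩, rfl⟩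
  have hPB : ∀ t z, P t z → z.1 ∈ B := by
    rintro t z ⟨vv, xx, ff, hadj, qq, hlink, hass, -, -⟩
    rcases hass.1 with h | h
    · rw [h]; exact hlink.2.2.1
    · rw [h]; exact hlink.2.2.2.1
  have hPinj : ∀ t t' z, P t z → P t' z → t = t' := by
    rintro t t' z ⟨vv, xx, ff, hadj, qq, hlink, hass, hcase, hsd⟩
      ⟨vv', xx', ff', hadj', qq', hlink', hass', hcase', hsd'⟩
    have hiff := CCC.assign_inj hcac hB3 hass hass'
    have hsdd : (vv = z.1) ↔ (vv' = z.1) := decide_eq_decide.mp (hsd.symm.trans hsd')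
    have hkey : vv = vv' ∧ xx = xx' := by
      have hfin : vv' = vv → vv = vv' ∧ xx = xx' := by
        intro hvv
        have hmem : s(vv', xx') ∈ (Walk.cons hadj qq).edges :=
          (hiff s(vv', xx')).mpr (by rw [Walk.edges_cons]; exact List.mem_cons_self)
        have hes := CCC.edge_start hadj qq hlink.1 hmem
          (by rw [← hvv]; exact Sym2.mem_mk_left _ _)
        rcases Sym2.eq_iff.mp hes with ⟨h1, h2⟩ | ⟨h1, h2⟩
        · exact ⟨hvv.symm, h2.symm⟩
        · exact absurd (hvv.symm.trans h1) hadj.ne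
      by_cases hvw : vv = z.1
      · exact hfin ((hsdd.mp hvw).trans hvw.symm)
      · have hvw' : vv' ≠ z.1 := fun h => hvw (hsdd.mpr h)
        have hwff : z.1 = ff := by
          rcases hass.1 with h | h
          · exact absurd h.symm hvw
          · exact h
        have hmem : s(vv', xx') ∈ (Walk.cons hadj qq).edges :=
          (hiff s(vv', xx')).mpr (by rw [Walk.edges_cons]; exact List.mem_cons_self)
        have hsupp : vv' ∈ (Walk.cons hadj qq).support :=
          (Walk.cons hadj qq).fst_mem_support_of_mem_edges hmem
        have hvv : vv' = vv := by
          by_contra hne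
          have hnf : vv' ≠ ff := fun h => hvw' (h.trans hwff.symm)
          exact hlink.2.2.2.2 vv' hsupp hne hnf hlink'.2.2.1
        exact hfin hvv
    obtain ⟨hvv, hxx⟩ := hkey
    rcases hcase with ⟨htB, hv1, hxB⟩ | ⟨htB, hx1⟩ <;>
      rcases hcase' with ⟨htB', hv2, hxB'⟩ | ⟨htB', hx2⟩
    · rw [← hv1, hvv, hv2]
    · exfalso
      apply htB'
      rw [← hx2, ← hxx]
      exact hxB
    · exfalso
      apply htB
      rw [← hx1, hxx]
      exact hxB'
    · rw [← hx1, hxx, hx2]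
  set fmap : W → W × Bool × Bool := fun t => if h : ∃ z, P t z then h.choose else (t, true, true)
    with hfdef
  have hmaps : ∀ t ∈ {t : W | (∃ t₁ t₂ : W, BigWitness ψ t₁ ∧ BigWitness ψ t₂ ∧ t₁ ≠ t₂ ∧
      ∃ p : T.Walk t₁ t₂, p.IsPath ∧ t ∈ p.support) ∧
      ∃ t' : W, BigWitness ψ t' ∧ T.Adj t t'},
      fmap t ∈ {z : W × Bool × Bool | z.1 ∈ B} := by
    intro t ht
    have h := hPex t ht
    have : fmap t = h.choose := dif_pos h
    rw [this]
    exact hPB t _ h.choose_spec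
  have hinj : Set.InjOn fmap {t : W | (∃ t₁ t₂ : W, BigWitness ψ t₁ ∧ BigWitness ψ t₂ ∧
      t₁ ≠ t₂ ∧ ∃ p : T.Walk t₁ t₂, p.IsPath ∧ t ∈ p.support) ∧
      ∃ t' : W, BigWitness ψ t' ∧ T.Adj t t'} := by
    intro t ht t' ht' heq
    have h := hPex t ht
    have h' := hPex t' ht'
    rw [show fmap t = h.choose from dif_pos h, show fmap t' = h'.choose from dif_pos h'] at heq
    exact hPinj t t' _ h.choose_spec (heq ▸ h'.choose_spec)
  have hle := Set.ncard_le_ncard_of_injOn fmap hmaps hinj (Set.toFinite _)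
  refine hle.trans (le_of_eq ?_)
  have hTgt : {z : W × Bool × Bool | z.1 ∈ B} = B ×ˢ (Set.univ : Set (Bool × Bool)) := by
    ext z
    simp [Set.mem_prod]
  rw [hTgt, ← Nat.card_coe_set_eq, Nat.card_congr (Equiv.Set.prod B Set.univ),
    Nat.card_prod, Nat.card_coe_set_eq]
  have h4 : Nat.card ↥(Set.univ : Set (Bool × Bool)) = 4 := by
    rw [Nat.card_congr (Equiv.Set.univ _)]
    simp [Nat.card_eq_fintype_card]
  rw [h4, Nat.mul_comm]
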